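/- Let 1 ≤ p < ∞, R > 0, μ ≥ 0 and C_φ ≥ 1. Then there exist constants C₁, C₂ > 0, depending only on p, R, μ, C_φ, such that for every weight function φ of exponential growth rate μ with constant C_φ and every measurable u : ℝ² → ℝ one has C₁ ∫_{ℝ²} φ(x₀) ( ∫_{B_R(x₀)} |u(x)|ᵖ dx ) dx₀ ≤ ∫_{ℝ²} φ(x)|u(x)|ᵖ dx ≤ C₂ ∫_{ℝ²} φ(x₀) ( ∫_{B_R(x₀)} |u(x)|ᵖ dx ) dx₀ (inequalities in [0,∞]). -/

import Mathlib

open MeasureTheory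
open scoped ENNReal

/-- A positive function `φ` on `ℝ²` is a weight function of exponential growth rate `μ ≥ 0`
with constant `Cφ` if `φ(x+y) ≤ Cφ e^{μ|y|} φ(x)` for all `x, y`. -/
def IsWeight (μ Cφ : ℝ) (φ : EuclideanSpace ℝ (Fin 2) → ℝ) : Prop :=
  (∀ x, 0 < φ x) ∧ ∀ x y, φ (x + y) ≤ Cφ * Real.exp (μ * ‖y‖) * φ x

theorem weighted_norm_equivalence (p R μ Cφ : ℝ) (hp : 1 ≤ p) (hR : 0 < R)
    (hμ : 0 ≤ μ) (hCφ : 1 ≤ Cφ) :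
    ∃ C₁ C₂ : ℝ, 0 < C₁ ∧ 0 < C₂ ∧
      ∀ φ : EuclideanSpace ℝ (Fin 2) → ℝ, IsWeight μ Cφ φ → Measurable φ →
      ∀ u : EuclideanSpace ℝ (Fin 2) → ℝ, Measurable u →
        ENNReal.ofReal C₁ *
            ∫⁻ x₀, ENNReal.ofReal (φ x₀) *
              ∫⁻ x in Metric.ball x₀ R, ENNReal.ofReal (|u x| ^ p) ≤
          ∫⁻ x, ENNReal.ofReal (φ x) * ENNReal.ofReal (|u x| ^ p) ∧
        ∫⁻ x, ENNReal.ofReal (φ x) * ENNReal.ofReal (|u x| ^ p) ≤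
          ENNReal.ofReal C₂ *
            ∫⁻ x₀, ENNReal.ofReal (φ x₀) *
              ∫⁻ x in Metric.ball x₀ R, ENNReal.ofReal (|u x| ^ p) := by
  classical
  set E := EuclideanSpace ℝ (Fin 2)
  set K : ℝ := Cφ * Real.exp (μ * R) with hKdef
  have hexp1 : (1:ℝ) ≤ Real.exp (μ * R) := Real.one_le_exp (by positivity)
  have hK1 : 1 ≤ K := by nlinarith
  have hK0 : 0 < K := lt_of_lt_of_le one_pos hK1
  set Vr : ℝ := (volume (Metric.ball (0 : E) R)).toReal with hVrdef
  have hVpos : 0 < Vr :=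
    ENNReal.toReal_pos (Metric.measure_ball_pos _ _ hR).ne' measure_ball_lt_top.ne
  have hVol : ∀ x : E, volume (Metric.ball x R) = ENNReal.ofReal Vr := by
    intro x
    rw [Measure.addHaar_ball_center, hVrdef, ENNReal.ofReal_toReal measure_ball_lt_top.ne]
  refine ⟨(K * Vr)⁻¹, K / Vr, by positivity, by positivity, ?_⟩
  intro φ hφ hφm u hum
  set f : E → ℝ≥0∞ := fun x => ENNReal.ofReal (|u x| ^ p) with hfdef
  set g : E → ℝ≥0∞ := fun x => ENNReal.ofReal (φ x) with hgdef
  have hfm : Measurable f :=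
    (((continuous_id.rpow_const fun _ => Or.inr (by linarith)).measurable).comp
      hum.abs).ennreal_ofReal
  have hgm : Measurable g := hφm.ennreal_ofReal
  -- pointwise weight bounds on balls
  have hφbound : ∀ x y : E, y ∈ Metric.ball x R → φ y ≤ K * φ x := by
    intro x y hy
    have hd : ‖y - x‖ < R := by rwa [← dist_eq_norm, ← Metric.mem_ball]
    have hxx : x + (y - x) = y := by abel
    have h1 := hφ.2 x (y - x)
    rw [hxx] at h1
    have he : Real.exp (μ * ‖y - x‖) ≤ Real.exp (μ * R) :=
      Real.exp_le_exp.2 (by nlinarith [norm_nonneg (y - x)])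
    have hx0 := (hφ.1 x).le
    have h2 : Cφ * φ x * Real.exp (μ * ‖y - x‖) ≤ Cφ * φ x * Real.exp (μ * R) :=
      mul_le_mul_of_nonneg_left he (mul_nonneg (by linarith) hx0)
    rw [hKdef]
    nlinarith [Real.exp_pos (μ * ‖y - x‖)]
  have hub : ∀ x x₀ : E, x₀ ∈ Metric.ball x R → g x₀ ≤ ENNReal.ofReal K * g x := by
    intro x x₀ hx₀
    rw [hgdef, ← ENNReal.ofReal_mul hK0.le]
    exact ENNReal.ofReal_le_ofReal (hφbound x x₀ hx₀)
  have hlb : ∀ x x₀ : E, x₀ ∈ Metric.ball x R → ENNReal.ofReal K⁻¹ * g x ≤ g x₀ := by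
    intro x x₀ hx₀
    have hmem : x ∈ Metric.ball x₀ R := Metric.mem_ball_comm.1 hx₀
    have h1 : φ x ≤ K * φ x₀ := hφbound x₀ x hmem
    have h2 : K⁻¹ * φ x ≤ φ x₀ := by
      rw [inv_mul_le_iff₀ hK0]; linarith
    rw [hgdef, ← ENNReal.ofReal_mul (by positivity)]
    exact ENNReal.ofReal_le_ofReal h2
  -- Tonelli swap
  set S : Set (E × E) := {q : E × E | dist q.2 q.1 < R} with hSdef
  have hSopen : IsOpen S := isOpen_lt (by fun_prop) continuous_const
  set F : E × E → ℝ≥0∞ := fun q => S.indicator (fun q => g q.1 * f q.2) q with hFdef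
  have hFm : Measurable F :=
    ((hgm.comp measurable_fst).mul (hfm.comp measurable_snd)).indicator hSopen.measurableSet
  have hswap : (∫⁻ x₀, g x₀ * ∫⁻ x in Metric.ball x₀ R, f x)
      = ∫⁻ x, f x * ∫⁻ x₀ in Metric.ball x R, g x₀ := by
    have h1 : ∀ x₀ : E, g x₀ * ∫⁻ x in Metric.ball x₀ R, f x = ∫⁻ x, F (x₀, x) := by
      intro x₀
      rw [← lintegral_const_mul _ hfm, ← lintegral_indicator measurableSet_ball _]
      congr 1
    have h2 : ∀ x : E, (∫⁻ x₀, F (x₀, x)) = f x * ∫⁻ x₀ in Metric.ball x R, g x₀ := by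
      intro x
      have heq : ∀ x₀ : E, F (x₀, x) =
          (Metric.ball x R).indicator (fun x₀ => g x₀ * f x) x₀ := by
        intro x₀
        have : (x₀, x) ∈ S ↔ x₀ ∈ Metric.ball x R := by
          simp [hSdef, Metric.mem_ball, dist_comm]
        simp only [hFdef, Set.indicator_apply, this]
      rw [lintegral_congr heq, lintegral_indicator measurableSet_ball _,
        lintegral_mul_const _ hgm, mul_comm]
    calc (∫⁻ x₀, g x₀ * ∫⁻ x in Metric.ball x₀ R, f x)
        = ∫⁻ x₀, ∫⁻ x, F (x₀, x) := lintegral_congr h1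
      _ = ∫⁻ x, ∫⁻ x₀, F (x₀, x) := by
          exact lintegral_lintegral_swap hFm.aemeasurable
      _ = ∫⁻ x, f x * ∫⁻ x₀ in Metric.ball x R, g x₀ := lintegral_congr h2
  -- bounds on the inner integral over balls
  have hinner_ub : ∀ x : E, (∫⁻ x₀ in Metric.ball x R, g x₀) ≤
      ENNReal.ofReal (K * Vr) * g x := by
    intro x
    calc (∫⁻ x₀ in Metric.ball x R, g x₀)
        ≤ ∫⁻ _ in Metric.ball x R, ENNReal.ofReal K * g x :=
          setLIntegral_mono' measurableSet_ball (hub x)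
      _ = ENNReal.ofReal K * g x * volume (Metric.ball x R) := setLIntegral_const _ _
      _ = ENNReal.ofReal (K * Vr) * g x := by
          rw [hVol x, ENNReal.ofReal_mul hK0.le]; ring
  have hinner_lb : ∀ x : E, ENNReal.ofReal (K⁻¹ * Vr) * g x ≤
      ∫⁻ x₀ in Metric.ball x R, g x₀ := by
    intro x
    calc ENNReal.ofReal (K⁻¹ * Vr) * g x
        = ENNReal.ofReal K⁻¹ * g x * volume (Metric.ball x R) := by
          rw [hVol x, ENNReal.ofReal_mul (by positivity)]; ring
      _ = ∫⁻ _ in Metric.ball x R, ENNReal.ofReal K⁻¹ * g x := (setLIntegral_const _ _).symm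
      _ ≤ ∫⁻ x₀ in Metric.ball x R, g x₀ :=
          setLIntegral_mono' measurableSet_ball (hlb x)
  set T : ℝ≥0∞ := ∫⁻ x, g x * f x with hTdef
  have hI_ub : (∫⁻ x₀, g x₀ * ∫⁻ x in Metric.ball x₀ R, f x) ≤ ENNReal.ofReal (K * Vr) * T := by
    rw [hswap, hTdef, ← lintegral_const_mul _ (show Measurable fun x => g x * f x from hgm.mul hfm)]
    refine lintegral_mono fun x => ?_
    calc f x * ∫⁻ x₀ in Metric.ball x R, g x₀
        ≤ f x * (ENNReal.ofReal (K * Vr) * g x) :=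
          mul_le_mul_right (hinner_ub x) _
      _ = ENNReal.ofReal (K * Vr) * (g x * f x) := by ring
  have hI_lb : ENNReal.ofReal (K⁻¹ * Vr) * T ≤
      ∫⁻ x₀, g x₀ * ∫⁻ x in Metric.ball x₀ R, f x := by
    rw [hswap, hTdef, ← lintegral_const_mul _ (show Measurable fun x => g x * f x from hgm.mul hfm)]
    refine lintegral_mono fun x => ?_
    calc ENNReal.ofReal (K⁻¹ * Vr) * (g x * f x)
        = f x * (ENNReal.ofReal (K⁻¹ * Vr) * g x) := by ring
      _ ≤ f x * ∫⁻ x₀ in Metric.ball x R, g x₀ :=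
          mul_le_mul_right (hinner_lb x) _
  have hKV1 : ENNReal.ofReal (K * Vr)⁻¹ * ENNReal.ofReal (K * Vr) = 1 := by
    rw [← ENNReal.ofReal_mul (by positivity),
      inv_mul_cancel₀ (by positivity : K * Vr ≠ 0), ENNReal.ofReal_one]
  have hKV2 : ENNReal.ofReal (K / Vr) * ENNReal.ofReal (K⁻¹ * Vr) = 1 := by
    rw [← ENNReal.ofReal_mul (by positivity),
      show K / Vr * (K⁻¹ * Vr) = 1 by field_simp, ENNReal.ofReal_one]
  constructor
  · show ENNReal.ofReal (K * Vr)⁻¹ * (∫⁻ x₀, g x₀ * ∫⁻ x in Metric.ball x₀ R, f x) ≤ T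
    calc ENNReal.ofReal (K * Vr)⁻¹ * (∫⁻ x₀, g x₀ * ∫⁻ x in Metric.ball x₀ R, f x)
        ≤ ENNReal.ofReal (K * Vr)⁻¹ * (ENNReal.ofReal (K * Vr) * T) :=
          mul_le_mul_right hI_ub _
      _ = T := by rw [← mul_assoc, hKV1, one_mul]
  · show T ≤ ENNReal.ofReal (K / Vr) * ∫⁻ x₀, g x₀ * ∫⁻ x in Metric.ball x₀ R, f x
    calc T = ENNReal.ofReal (K / Vr) * (ENNReal.ofReal (K⁻¹ * Vr) * T) := by
          rw [← mul_assoc, hKV2, one_mul]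
      _ ≤ ENNReal.ofReal (K / Vr) * ∫⁻ x₀, g x₀ * ∫⁻ x in Metric.ball x₀ R, f x :=
          mul_le_mul_right hI_lb _
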